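/- Let E, J, R : ℝⁿ → ℝ^{n×n}, η : ℝⁿ → ℝⁿ, B : ℝⁿ → ℝ^{n×m} be continuous with J(x) = −J(x)ᵀ and R(x) = R(x)ᵀ ⪰ 0 for all x, and let H : ℝⁿ → [0,∞) be C¹ with ∇H(x) = E(x)ᵀ η(x). Assume the map f : ℝⁿ → ℝⁿ, f(x) := R(x)^{1/2} η(x), is C², that M := {x | f(x) = 0} is nonempty, that there are an open neighborhood G of M and 0 < s < n with dim(ker Df_x) = s for all x ∈ G, and that the smallest nonzero singular value of Df_x is ≥ c̃ > 0 on G; let V ⊇ M be the open set and c > 0 the constant from the distance estimate c·dist(x,M) ≤ ‖f(x)‖ on V. Then for every T > 0, every control u and differentiable solution x of E(x)ẋ = (J(x) − R(x))η(x) + B(x)u with output y = B(x)ᵀη(x) whose trajectory remains in V for all t ∈ [0,T] satisfies the dissipation inequality H(x(T)) − H(x(0)) ≤ ∫₀ᵀ [y(t)ᵀ u(t) − α(dist(x(t), M))] dt, with α(σ) := c²σ² belonging to the class 𝒦. In particular, the optimal control problem of minimizing ∫₀ᵀ yᵀu dt subject to these dynamics is dissipative with respect to the manifold M with storage function H. 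-/

import Mathlib

open Set Metric MeasureTheory
open scoped RealInnerProductSpace

/-- The smallest nonzero singular value of `A`, i.e. the infimum of `‖A v‖` over unit
vectors `v` orthogonal to the kernel of `A`. -/
noncomputable def smallestPosSV {n : ℕ}
    (A : EuclideanSpace ℝ (Fin n) →L[ℝ] EuclideanSpace ℝ (Fin n)) : ℝ :=
  sInf {r : ℝ | ∃ v ∈ (LinearMap.ker (A : EuclideanSpace ℝ (Fin n) →ₗ[ℝ] EuclideanSpace ℝ (Fin n)))ᗮ, ‖v‖ = 1 ∧ r = ‖A v‖}

/-- (The port-Hamiltonian optimal control problem is manifold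
dissipative.)  With the port-Hamiltonian structure of Statement 10, a nonnegative
Hamiltonian `H`, `f(x) := R(x)^{1/2}η(x)` of class `C²`, `M = f⁻¹(0)` nonempty, constant
kernel dimension `0 < s < n` of `Df` on a neighborhood `G` of `M`, smallest nonzero
singular value of `Df` bounded below by `c̃ > 0` on `G`, and `V ⊇ M` open with
`c·dist(x,M) ≤ ‖f(x)‖` on `V`: every solution on `[0,T]` whose trajectory stays in `V`
satisfies the dissipation inequality
`H(x(T)) − H(x(0)) ≤ ∫₀ᵀ (yᵀu − α(dist(x,M))) dt` with `α(σ) = c²σ²`, and `α` is of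
class `𝒦` (vanishing at `0`, continuous and strictly increasing on `[0,∞)`). -/
theorem statement11
    (n m s : ℕ) (hs0 : 0 < s) (hsn : s < n)
    (E J R Rhalf : EuclideanSpace ℝ (Fin n) → (EuclideanSpace ℝ (Fin n) →L[ℝ] EuclideanSpace ℝ (Fin n)))
    (η : EuclideanSpace ℝ (Fin n) → EuclideanSpace ℝ (Fin n))
    (B : EuclideanSpace ℝ (Fin n) → (EuclideanSpace ℝ (Fin m) →L[ℝ] EuclideanSpace ℝ (Fin n)))
    (hEc : Continuous E) (hJc : Continuous J) (hRc : Continuous R)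
    (hηc : Continuous η) (hBc : Continuous B)
    (hJskew : ∀ x, ContinuousLinearMap.adjoint (J x) = -(J x))
    (hRsym : ∀ x, ContinuousLinearMap.adjoint (R x) = R x)
    (hRpsd : ∀ x v, 0 ≤ ⟪v, R x v⟫)
    (hRhalfsym : ∀ x, ContinuousLinearMap.adjoint (Rhalf x) = Rhalf x)
    (hRhalfpsd : ∀ x v, 0 ≤ ⟪v, Rhalf x v⟫)
    (hRhalfsq : ∀ x, (Rhalf x).comp (Rhalf x) = R x)
    (H : EuclideanSpace ℝ (Fin n) → ℝ) (hH : ContDiff ℝ 1 H) (hHpos : ∀ z, 0 ≤ H z)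
    (hgrad : ∀ x, gradient H x = ContinuousLinearMap.adjoint (E x) (η x))
    (f : EuclideanSpace ℝ (Fin n) → EuclideanSpace ℝ (Fin n))
    (hfdef : ∀ z, f z = Rhalf z (η z)) (hf : ContDiff ℝ 2 f)
    (M : Set (EuclideanSpace ℝ (Fin n))) (hMdef : M = {z | f z = 0}) (hMne : M.Nonempty)
    (G : Set (EuclideanSpace ℝ (Fin n))) (hG : IsOpen G) (hMG : M ⊆ G)
    (hker : ∀ z ∈ G, Module.finrank ℝ (LinearMap.ker (fderiv ℝ f z : EuclideanSpace ℝ (Fin n) →ₗ[ℝ] EuclideanSpace ℝ (Fin n))) = s)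
    (ctilde : ℝ) (hctilde : 0 < ctilde)
    (hsv : ∀ z ∈ G, ctilde ≤ smallestPosSV (fderiv ℝ f z))
    (V : Set (EuclideanSpace ℝ (Fin n))) (hV : IsOpen V) (hMV : M ⊆ V)
    (c : ℝ) (hc : 0 < c)
    (hdist : ∀ z ∈ V, c * infDist z M ≤ ‖f z‖)
    (T : ℝ) (hT : 0 < T)
    (u : ℝ → EuclideanSpace ℝ (Fin m))
    (x x' : ℝ → EuclideanSpace ℝ (Fin n))
    (hsol : ∀ t ∈ Icc 0 T, HasDerivAt x (x' t) t ∧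
      E (x t) (x' t) = (J (x t) - R (x t)) (η (x t)) + B (x t) (u t))
    (hstay : ∀ t ∈ Icc 0 T, x t ∈ V)
    (hyu : IntervalIntegrable
      (fun t => ⟪ContinuousLinearMap.adjoint (B (x t)) (η (x t)), u t⟫) volume 0 T) :
    H (x T) - H (x 0)
      ≤ (∫ t in (0:ℝ)..T,
          (⟪ContinuousLinearMap.adjoint (B (x t)) (η (x t)), u t⟫
            - c ^ 2 * infDist (x t) M ^ 2)) ∧
    (c ^ 2 * (0:ℝ) ^ 2 = 0 ∧ ContinuousOn (fun σ : ℝ => c ^ 2 * σ ^ 2) (Ici 0) ∧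
      StrictMonoOn (fun σ : ℝ => c ^ 2 * σ ^ 2) (Ici 0)) := by
  have hIcc : uIcc (0:ℝ) T = Icc 0 T := uIcc_of_le hT.le
  -- continuity of x on [0,T]
  have hxC : ContinuousOn x (Icc 0 T) := fun t ht => ((hsol t ht).1.continuousAt).continuousWithinAt
  -- continuity of auxiliary functions
  have hφC : ContinuousOn (fun t => ‖f (x t)‖ ^ 2) (Icc 0 T) := by
    have : Continuous f := hf.continuous
    exact ((this.comp_continuousOn hxC).norm.pow 2)
  have hψC : ContinuousOn (fun t => c ^ 2 * infDist (x t) M ^ 2) (Icc 0 T) := by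
    exact (continuousOn_const.mul (((continuous_infDist_pt M).comp_continuousOn hxC).pow 2))
  have hφI : IntervalIntegrable (fun t => ‖f (x t)‖ ^ 2) volume 0 T := by
    apply ContinuousOn.intervalIntegrable; rwa [hIcc]
  have hψI : IntervalIntegrable (fun t => c ^ 2 * infDist (x t) M ^ 2) volume 0 T := by
    apply ContinuousOn.intervalIntegrable; rwa [hIcc]
  -- derivative of H ∘ x
  have hderiv : ∀ t ∈ Icc 0 T, HasDerivAt (fun t => H (x t))
      (⟪ContinuousLinearMap.adjoint (B (x t)) (η (x t)), u t⟫ - ‖f (x t)‖ ^ 2) t := by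
    intro t ht
    obtain ⟨hx', heq⟩ := hsol t ht
    have hd := ((hH.differentiable one_ne_zero (x t)).hasFDerivAt).comp_hasDerivAt t hx'
    refine hd.congr_deriv ?_
    have hgradval : fderiv ℝ H (x t) (x' t) = ⟪gradient H (x t), x' t⟫ := by
      rw [gradient]
      exact (InnerProductSpace.toDual_symm_apply).symm
    rw [hgradval, hgrad, ContinuousLinearMap.adjoint_inner_left (E (x t)), heq]
    have hJ0 : ⟪η (x t), J (x t) (η (x t))⟫ = 0 := by
      have h1 := ContinuousLinearMap.adjoint_inner_left (J (x t)) (η (x t)) (η (x t))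
      rw [hJskew] at h1
      simp only [ContinuousLinearMap.neg_apply, inner_neg_left] at h1
      have h2 := real_inner_comm (η (x t)) (J (x t) (η (x t)))
      linarith
    have hRf : ⟪η (x t), R (x t) (η (x t))⟫ = ‖f (x t)‖ ^ 2 := by
      rw [← hRhalfsq, ContinuousLinearMap.comp_apply]
      have : ⟪η (x t), Rhalf (x t) (Rhalf (x t) (η (x t)))⟫
          = ⟪Rhalf (x t) (η (x t)), Rhalf (x t) (η (x t))⟫ := by
        rw [← ContinuousLinearMap.adjoint_inner_left, hRhalfsym]
      rw [this, real_inner_self_eq_norm_sq, hfdef]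
    have hBu : ⟪η (x t), B (x t) (u t)⟫ = ⟪ContinuousLinearMap.adjoint (B (x t)) (η (x t)), u t⟫ :=
      (ContinuousLinearMap.adjoint_inner_left _ _ _).symm
    simp only [ContinuousLinearMap.sub_apply, inner_add_right, inner_sub_right, hJ0, hRf]
    linarith [hBu]
  -- FTC
  have hgI : IntervalIntegrable
      (fun t => ⟪ContinuousLinearMap.adjoint (B (x t)) (η (x t)), u t⟫ - ‖f (x t)‖ ^ 2) volume 0 T :=
    hyu.sub hφI
  have hFTC : (∫ t in (0:ℝ)..T,
      (⟪ContinuousLinearMap.adjoint (B (x t)) (η (x t)), u t⟫ - ‖f (x t)‖ ^ 2))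
      = H (x T) - H (x 0) := by
    apply intervalIntegral.integral_eq_sub_of_hasDerivAt
    · intro t ht; rw [hIcc] at ht; exact hderiv t ht
    · exact hgI
  constructor
  · rw [← hFTC]
    apply intervalIntegral.integral_mono_on hT.le hgI (hyu.sub hψI)
    intro t ht
    have hxV := hstay t ht
    have hle := hdist (x t) hxV
    have h0 : 0 ≤ infDist (x t) M := infDist_nonneg
    have hsq : c ^ 2 * infDist (x t) M ^ 2 ≤ ‖f (x t)‖ ^ 2 := by
      have := mul_self_le_mul_self (by positivity) hle
      nlinarith
    linarith
  · refine ⟨by ring, (continuous_const.mul (continuous_pow 2)).continuousOn, ?_⟩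
    intro a ha b hb hab
    have : a ^ 2 < b ^ 2 := by nlinarith [mem_Ici.mp ha]
    exact mul_lt_mul_of_pos_left this (by positivity)
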